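/- Let (Ω, F, P) be a probability space, V : Ω → ℝ^k a measurable random vector (the observed covariates on a missingness pattern), ξ : Ω → ℝ^l a random vector independent of V, C an l×k real matrix and d₀ ∈ ℝ^l, and define X_mis := C·V + d₀ + ξ (the missing covariates). Let β₀ ∈ ℝ, β_obs ∈ ℝ^k, β_mis ∈ ℝ^l, and suppose the real random variable ⟨β_mis, ξ⟩ is Gaussian with mean 0 and variance σ̃² > 0. Then, P-almost surely, the conditional expectation of Φ(β₀ + ⟨β_obs, V⟩ + ⟨β_mis, X_mis⟩) given the σ-algebra generated by V equals Φ((α₀ + ⟨α, V⟩)/√(1 + σ̃²)), where α₀ = β₀ + ⟨β_mis, d₀⟩ and α = β_obs + Cᵀβ_mis. -/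

import Mathlib

open MeasureTheory ProbabilityTheory Real Matrix
open scoped NNReal
open Set
open scoped ENNReal

/-- The standard normal CDF `Φ(t) = (2π)^{-1/2} ∫_{-∞}^t e^{-s²/2} ds`. -/
noncomputable def stdNormalCDF (t : ℝ) : ℝ :=
  ∫ s in Set.Iic t, Real.exp (-s ^ 2 / 2) / Real.sqrt (2 * Real.pi)


lemma stdNormalCDF_eq_integral_pdf (t : ℝ) :
    stdNormalCDF t = ∫ s in Set.Iic t, gaussianPDFReal 0 1 s := by
  unfold stdNormalCDF
  refine setIntegral_congr_fun measurableSet_Iic fun s _ => ?_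
  simp [gaussianPDFReal, div_eq_inv_mul, mul_comm]

lemma stdNormalCDF_eq_measure (t : ℝ) :
    stdNormalCDF t = ((gaussianReal 0 1) (Set.Iic t)).toReal := by
  rw [gaussianReal_apply_eq_integral 0 one_ne_zero,
    ENNReal.toReal_ofReal (integral_nonneg fun s => gaussianPDFReal_nonneg 0 1 s),
    stdNormalCDF_eq_integral_pdf]

lemma stdNormalCDF_nonneg (t : ℝ) : 0 ≤ stdNormalCDF t := by
  rw [stdNormalCDF_eq_measure]; exact ENNReal.toReal_nonneg

lemma stdNormalCDF_le_one (t : ℝ) : stdNormalCDF t ≤ 1 := by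
  rw [stdNormalCDF_eq_measure]
  exact (ENNReal.toReal_le_of_le_ofReal zero_le_one (by simpa using prob_le_one))

lemma monotone_stdNormalCDF : Monotone stdNormalCDF := by
  intro s t hst
  rw [stdNormalCDF_eq_measure, stdNormalCDF_eq_measure]
  exact ENNReal.toReal_mono (measure_ne_top _ _) (measure_mono (Set.Iic_subset_Iic.mpr hst))

lemma measurable_stdNormalCDF : Measurable stdNormalCDF :=
  monotone_stdNormalCDF.measurable

lemma gaussianReal_Iic_toReal (v : ℝ≥0) (a : ℝ) :
    ((gaussianReal 0 (1 + v)) (Set.Iic a)).toReal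
      = ((gaussianReal 0 1) (Set.Iic (a / Real.sqrt (1 + (v:ℝ))))).toReal := by
  have hc : (0:ℝ) < Real.sqrt (1 + (v:ℝ)) := by positivity
  have hmap : (gaussianReal 0 1).map (· * Real.sqrt (1 + (v:ℝ))) = gaussianReal 0 (1 + v) := by
    rw [gaussianReal_map_mul_const, mul_zero]
    congr 1
    apply NNReal.eq
    push_cast
    rw [mul_one, Real.sq_sqrt (by positivity)]
  rw [← hmap, Measure.map_apply (measurable_mul_const _) measurableSet_Iic]
  congr 2
  ext x
  simp only [Set.mem_preimage, Set.mem_Iic]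
  rw [le_div_iff₀ hc]

lemma pdf_mul (v : ℝ≥0) (hv : v ≠ 0) (u w : ℝ) :
    gaussianPDFReal 0 v w * gaussianPDFReal 0 1 (u + w)
      = gaussianPDFReal 0 (1+v) u * gaussianPDFReal (-(u*(v:ℝ))/(1+(v:ℝ))) (v/(1+v)) w := by
  have hv' : (0:ℝ) < v := lt_of_le_of_ne v.coe_nonneg (by exact_mod_cast hv.symm)
  have h1v : (0:ℝ) < 1 + (v:ℝ) := by positivity
  simp only [gaussianPDFReal, NNReal.coe_add, NNReal.coe_one, NNReal.coe_div, sub_zero, mul_one]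
  rw [mul_mul_mul_comm, mul_mul_mul_comm ((√(2 * π * (1 + (v:ℝ))))⁻¹)]
  congr 1
  · rw [← mul_inv, ← mul_inv, ← Real.sqrt_mul (by positivity), ← Real.sqrt_mul (by positivity)]
    congr 2
    field_simp
  · rw [← Real.exp_add, ← Real.exp_add, Real.exp_eq_exp]
    field_simp
    ring

lemma integral_gaussianReal_eq (v : ℝ≥0) (hv : v ≠ 0) (f : ℝ → ℝ) :
    ∫ w, f w ∂(gaussianReal 0 v) = ∫ w, gaussianPDFReal 0 v w * f w := by
  rw [gaussianReal_of_var_ne_zero 0 hv]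
  have h : (gaussianPDF 0 v) = fun x => ((gaussianPDFReal 0 v x).toNNReal : ℝ≥0∞) := by
    ext x; simp [gaussianPDF, ENNReal.ofReal]
  rw [h, integral_withDensity_eq_integral_smul (measurable_gaussianPDFReal 0 v).real_toNNReal]
  simp_rw [NNReal.smul_def, Real.coe_toNNReal _ (gaussianPDFReal_nonneg 0 v _), smul_eq_mul]

lemma conv_eq (v : ℝ≥0) (hv : v ≠ 0) (u : ℝ) :
    ∫ w, gaussianPDFReal 0 1 (u + w) ∂(gaussianReal 0 v) = gaussianPDFReal 0 (1+v) u := by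
  rw [integral_gaussianReal_eq v hv]
  simp_rw [pdf_mul v hv u]
  rw [integral_const_mul, integral_gaussianPDFReal_eq_one _ (div_ne_zero hv (by positivity)),
    mul_one]

lemma pdf1_le (x : ℝ) : gaussianPDFReal 0 1 x ≤ (Real.sqrt (2*π))⁻¹ := by
  rw [gaussianPDFReal]
  calc (√(2 * π * 1))⁻¹ * rexp (-(x - 0) ^ 2 / (2 * 1))
      ≤ (√(2 * π * 1))⁻¹ * 1 := by
        refine mul_le_mul_of_nonneg_left ?_ (by positivity)
        exact Real.exp_le_one_iff.mpr (by nlinarith [sq_nonneg (x - 0)])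
    _ = (√(2*π))⁻¹ := by rw [mul_one, mul_one]

lemma integrable_pdf1_shift (μ : Measure ℝ) [IsFiniteMeasure μ] (u : ℝ) :
    Integrable (fun w => gaussianPDFReal 0 1 (u + w)) μ := by
  refine Integrable.mono' (integrable_const ((Real.sqrt (2*π))⁻¹)) ?_ (ae_of_all _ fun w => ?_)
  · exact ((measurable_gaussianPDFReal 0 1).comp (measurable_const.add measurable_id)).aestronglyMeasurable
  · rw [Real.norm_eq_abs, abs_of_nonneg (gaussianPDFReal_nonneg 0 1 _)]
    exact pdf1_le _

lemma stdNormalCDF_shift (a w : ℝ) :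
    stdNormalCDF (a + w) = ∫ u in Iic a, gaussianPDFReal 0 1 (u + w) := by
  rw [stdNormalCDF_eq_integral_pdf, ← integral_indicator measurableSet_Iic,
    ← integral_indicator measurableSet_Iic,
    ← integral_add_right_eq_self (fun s => (Iic (a+w)).indicator (gaussianPDFReal 0 1) s) w]
  congr 1
  ext u
  by_cases h : u ≤ a <;>
    simp [Set.indicator_apply, Set.mem_Iic, h, add_le_add_iff_right]

lemma key_integral (v : ℝ≥0) (hv : v ≠ 0) (a : ℝ) :
    ∫ w, stdNormalCDF (a + w) ∂(gaussianReal 0 v)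
      = stdNormalCDF (a / Real.sqrt (1 + (v:ℝ))) := by
  set μ := gaussianReal 0 v with hμdef
  have hpdfmeas : Measurable fun p : ℝ × ℝ => gaussianPDFReal 0 1 (p.2 + p.1) :=
    (measurable_gaussianPDFReal 0 1).comp (measurable_snd.add measurable_fst)
  have h1v : (1 : ℝ≥0) + v ≠ 0 :=
    (lt_of_lt_of_le one_pos (le_add_of_nonneg_right zero_le)).ne'
  calc ∫ w, stdNormalCDF (a + w) ∂μ
      = ∫ w, (∫ u in Iic a, gaussianPDFReal 0 1 (u + w)) ∂μ := by
        simp_rw [stdNormalCDF_shift]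
    _ = (∫⁻ w, ENNReal.ofReal (∫ u in Iic a, gaussianPDFReal 0 1 (u + w)) ∂μ).toReal := by
        rw [integral_eq_lintegral_of_nonneg_ae
          (ae_of_all _ fun w => integral_nonneg fun u => gaussianPDFReal_nonneg 0 1 _)
          (hpdfmeas.stronglyMeasurable.integral_prod_right'.aestronglyMeasurable)]
    _ = (∫⁻ w, (∫⁻ u in Iic a, ENNReal.ofReal (gaussianPDFReal 0 1 (u + w))) ∂μ).toReal := by
        congr 1
        refine lintegral_congr fun w => ?_
        exact ofReal_integral_eq_lintegral_ofReal
          ((integrable_gaussianPDFReal 0 1).comp_add_right w).integrableOn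
          (ae_of_all _ fun u => gaussianPDFReal_nonneg 0 1 _)
    _ = (∫⁻ u in Iic a, (∫⁻ w, ENNReal.ofReal (gaussianPDFReal 0 1 (u + w)) ∂μ)).toReal := by
        rw [lintegral_lintegral_swap (hpdfmeas.ennreal_ofReal.aemeasurable)]
    _ = (∫⁻ u in Iic a, ENNReal.ofReal (gaussianPDFReal 0 (1+v) u)).toReal := by
        congr 1
        refine lintegral_congr fun u => ?_
        rw [← conv_eq v hv u]
        exact (ofReal_integral_eq_lintegral_ofReal (integrable_pdf1_shift μ u)
          (ae_of_all _ fun w => gaussianPDFReal_nonneg 0 1 _)).symm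
    _ = ((gaussianReal 0 (1+v)) (Iic a)).toReal := by
        rw [gaussianReal_apply_eq_integral 0 h1v,
          ofReal_integral_eq_lintegral_ofReal (integrable_gaussianPDFReal 0 (1+v)).integrableOn
          (ae_of_all _ fun u => gaussianPDFReal_nonneg 0 (1+v) _)]
    _ = stdNormalCDF (a / Real.sqrt (1 + (v:ℝ))) := by
        rw [gaussianReal_Iic_toReal, ← stdNormalCDF_eq_measure]

lemma integrable_stdNormalCDF_comp {α : Type*} [MeasurableSpace α] (μ : Measure α)
    [IsFiniteMeasure μ] {f : α → ℝ} (hf : Measurable f) :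
    Integrable (fun ω => stdNormalCDF (f ω)) μ := by
  refine Integrable.mono' (integrable_const 1)
    ((measurable_stdNormalCDF.comp hf).aestronglyMeasurable) (ae_of_all _ fun ω => ?_)
  rw [Real.norm_eq_abs, abs_of_nonneg (stdNormalCDF_nonneg _)]
  exact stdNormalCDF_le_one _

lemma measurable_dotProduct {n : ℕ} (b : Fin n → ℝ) :
    Measurable fun x : Fin n → ℝ => b ⬝ᵥ x :=
  Finset.measurable_sum _ fun i _ => (measurable_pi_apply i).const_mul _


/-- Theorem 1 of the paper in regression-residual form: if the missing covariates satisfy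
`X_mis = C V + d₀ + ξ` with `ξ` independent of the observed covariates `V` and
`⟨β_mis, ξ⟩ ~ N(0, σ̃²)`, `σ̃² > 0`, then a.s.
`E[Φ(β₀ + ⟨β_obs, V⟩ + ⟨β_mis, X_mis⟩) | σ(V)] = Φ((α₀ + ⟨α, V⟩)/√(1 + σ̃²))`,
where `α₀ = β₀ + ⟨β_mis, d₀⟩` and `α = β_obs + Cᵀ β_mis`. -/
theorem probit_pattern_by_pattern {Ω : Type*} [MeasurableSpace Ω]
    (P : Measure Ω) [IsProbabilityMeasure P] (k l : ℕ)
    (V : Ω → (Fin k → ℝ)) (hV : Measurable V)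
    (ξ : Ω → (Fin l → ℝ)) (hξ : Measurable ξ)
    (hindep : IndepFun V ξ P)
    (C : Matrix (Fin l) (Fin k) ℝ) (d₀ : Fin l → ℝ)
    (Xmis : Ω → (Fin l → ℝ)) (hXmis : ∀ ω, Xmis ω = C.mulVec (V ω) + d₀ + ξ ω)
    (β₀ : ℝ) (βobs : Fin k → ℝ) (βmis : Fin l → ℝ)
    (σt2 : ℝ≥0) (hσt2 : 0 < σt2)
    (hgauss : P.map (fun ω => βmis ⬝ᵥ ξ ω) = gaussianReal 0 σt2) :
    ∀ᵐ ω ∂P,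
      (P[fun ω => stdNormalCDF (β₀ + βobs ⬝ᵥ V ω + βmis ⬝ᵥ Xmis ω) |
          MeasurableSpace.comap V inferInstance]) ω =
        stdNormalCDF (((β₀ + βmis ⬝ᵥ d₀) + (βobs + C.transpose.mulVec βmis) ⬝ᵥ V ω) /
          Real.sqrt (1 + (σt2 : ℝ))) := by
  have hm : MeasurableSpace.comap V inferInstance ≤ (inferInstance : MeasurableSpace Ω) :=
    hV.comap_le
  set c : ℝ := β₀ + βmis ⬝ᵥ d₀ with hc
  set α : Fin k → ℝ := βobs + C.transpose.mulVec βmis with hα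
  set W : Ω → ℝ := fun ω => βmis ⬝ᵥ ξ ω with hWdef
  have hWm : Measurable W := (measurable_dotProduct βmis).comp hξ
  have hindepVW : IndepFun V W P := hindep.comp measurable_id (measurable_dotProduct βmis)
  have hrw : ∀ ω, β₀ + βobs ⬝ᵥ V ω + βmis ⬝ᵥ Xmis ω = c + α ⬝ᵥ V ω + W ω := by
    intro ω
    rw [hXmis ω]
    simp only [hc, hα, dotProduct_add, add_dotProduct, dotProduct_mulVec, mulVec_transpose]
    ring
  have hFeq : (fun ω => stdNormalCDF (β₀ + βobs ⬝ᵥ V ω + βmis ⬝ᵥ Xmis ω))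
      = fun ω => stdNormalCDF (c + α ⬝ᵥ V ω + W ω) := funext fun ω => by rw [hrw ω]
  set g0 : (Fin k → ℝ) → ℝ :=
    fun v => stdNormalCDF ((c + α ⬝ᵥ v) / Real.sqrt (1 + (σt2:ℝ))) with hg0
  have haff : Measurable fun v : Fin k → ℝ => (c + α ⬝ᵥ v) / Real.sqrt (1 + (σt2:ℝ)) :=
    ((measurable_dotProduct α).const_add c).div_const _
  have hg0m : Measurable g0 := measurable_stdNormalCDF.comp haff
  have hFm : Measurable fun ω => c + α ⬝ᵥ V ω + W ω :=
    (measurable_const.add ((measurable_dotProduct α).comp hV)).add hWm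
  haveI : IsProbabilityMeasure (P.map V) := Measure.isProbabilityMeasure_map hV.aemeasurable
  have hmapVW : P.map (fun ω => (V ω, W ω)) = (P.map V).prod (gaussianReal 0 σt2) := by
    rw [← hgauss]
    exact (indepFun_iff_map_prod_eq_prod_map_map hV.aemeasurable hWm.aemeasurable).mp hindepVW
  have hGm : Measurable fun p : (Fin k → ℝ) × ℝ => stdNormalCDF (c + α ⬝ᵥ p.1 + p.2) :=
    measurable_stdNormalCDF.comp
      ((measurable_const.add ((measurable_dotProduct α).comp measurable_fst)).add measurable_snd)
  have heq : ∀ s, MeasurableSet[MeasurableSpace.comap V inferInstance] s → P s < ⊤ →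
      ∫ x in s, g0 (V x) ∂P = ∫ x in s, stdNormalCDF (c + α ⬝ᵥ V x + W x) ∂P := by
    rintro s ⟨A, hA, rfl⟩ -
    have hpre : V ⁻¹' A = (fun ω => (V ω, W ω)) ⁻¹' (A ×ˢ Set.univ) := by
      ext ω; simp
    calc ∫ x in V ⁻¹' A, g0 (V x) ∂P
        = ∫ v in A, g0 v ∂(P.map V) :=
          (setIntegral_map hA hg0m.aestronglyMeasurable hV.aemeasurable).symm
      _ = ∫ v in A, (∫ w, stdNormalCDF (c + α ⬝ᵥ v + w) ∂(gaussianReal 0 σt2)) ∂(P.map V) := by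
          refine setIntegral_congr_fun hA fun v _ => ?_
          rw [key_integral σt2 hσt2.ne' (c + α ⬝ᵥ v)]
      _ = ∫ p in A ×ˢ Set.univ, stdNormalCDF (c + α ⬝ᵥ p.1 + p.2)
            ∂((P.map V).prod (gaussianReal 0 σt2)) := by
          rw [← Measure.prod_restrict, Measure.restrict_univ]
          exact (integral_prod _ (integrable_stdNormalCDF_comp _
            ((measurable_const.add ((measurable_dotProduct α).comp measurable_fst)).add
              measurable_snd))).symm
      _ = ∫ p in A ×ˢ Set.univ, stdNormalCDF (c + α ⬝ᵥ p.1 + p.2)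
            ∂(P.map fun ω => (V ω, W ω)) := by rw [hmapVW]
      _ = ∫ x in (fun ω => (V ω, W ω)) ⁻¹' (A ×ˢ Set.univ),
            stdNormalCDF (c + α ⬝ᵥ V x + W x) ∂P :=
          setIntegral_map (hA.prod MeasurableSet.univ) hGm.aestronglyMeasurable
            (hV.prodMk hWm).aemeasurable
      _ = ∫ x in V ⁻¹' A, stdNormalCDF (c + α ⬝ᵥ V x + W x) ∂P := by rw [hpre]
  have hmain : (fun ω => g0 (V ω))
      =ᵐ[P] P[fun ω => stdNormalCDF (c + α ⬝ᵥ V ω + W ω) |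
        MeasurableSpace.comap V inferInstance] := by
    refine ae_eq_condExp_of_forall_setIntegral_eq hm
      (integrable_stdNormalCDF_comp P hFm)
      (fun s _ _ => (integrable_stdNormalCDF_comp P (haff.comp hV)).integrableOn)
      heq ?_
    exact ⟨fun ω => g0 (V ω), (hg0m.comp (comap_measurable V)).stronglyMeasurable,
      Filter.EventuallyEq.refl _ _⟩
  rw [hFeq]
  filter_upwards [hmain] with ω hω
  exact hω.symm
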